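/- Let K be an idempotent semifield and A : Matrix (Fin m) (Fin n) K. If A is *singular, then A is singular. -/

import Mathlib

/-- A matrix is singular if it admits an orthogonal decomposition `A = A₁ + A₂`
(entrywise disjoint supports) together with a nonzero vector `x` with `A₁ x = A₂ x`. -/
def Matrix.TropSingular {K : Type*} [Semifield K] {m n : Type*} [Fintype n]
    (A : Matrix m n K) : Prop :=
  ∃ A₁ A₂ : Matrix m n K, A = A₁ + A₂ ∧ (∀ i j, A₁ i j = 0 ∨ A₂ i j = 0) ∧
    ∃ x : n → K, x ≠ 0 ∧ A₁.mulVec x = A₂.mulVec x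

/-- A matrix is *singular if there are vectors `x₁, x₂` with disjoint supports,
not both zero, such that `A x₁ = A x₂`. -/
def Matrix.TropStarSingular {K : Type*} [Semifield K] {m n : Type*} [Fintype n]
    (A : Matrix m n K) : Prop :=
  ∃ x₁ x₂ : n → K, (∀ k, x₁ k = 0 ∨ x₂ k = 0) ∧ x₁ + x₂ ≠ 0 ∧
    A.mulVec x₁ = A.mulVec x₂

theorem starSingular_imp_singular {K : Type*} [Semifield K]
    (hidem : ∀ a : K, a + a = a) {m n : ℕ} (A : Matrix (Fin m) (Fin n) K)
    (h : A.TropStarSingular) : A.TropSingular := by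
  obtain ⟨x₁, x₂, hdisj, hne, heq⟩ := h
  classical
  refine ⟨fun i j => if x₂ j = 0 then A i j else 0,
          fun i j => if x₂ j = 0 then 0 else A i j, ?_, ?_, x₁ + x₂, hne, ?_⟩
  · ext i j
    change A i j = (if x₂ j = 0 then A i j else 0) + (if x₂ j = 0 then 0 else A i j)
    by_cases hj : x₂ j = 0 <;> simp [hj, Matrix.add_apply]
  · intro i j
    by_cases hj : x₂ j = 0 <;> simp [hj]
  · funext i
    simp only [Matrix.mulVec, dotProduct]
    have h1 : ∑ j, (if x₂ j = 0 then A i j else 0) * (x₁ + x₂) j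
        = ∑ j, A i j * x₁ j := by
      refine Finset.sum_congr rfl fun j _ => ?_
      by_cases hj : x₂ j = 0
      · simp [hj]
      · simp [hj, (hdisj j).resolve_right hj]
    have h2 : ∑ j, (if x₂ j = 0 then 0 else A i j) * (x₁ + x₂) j
        = ∑ j, A i j * x₂ j := by
      refine Finset.sum_congr rfl fun j _ => ?_
      by_cases hj : x₂ j = 0
      · simp [hj]
      · simp [hj, (hdisj j).resolve_right hj]
    rw [h1, h2]
    exact congrFun heq i
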